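/- The shifted Heller constant in dimension 3 equals 12: (a) there exist a vector t ∈ [0,1)^3 \ {0} and a matrix A ∈ {-1,0,1}^{3×12} with pairwise distinct columns such that t+A is totally 1-submodular; and (b) for every t ∈ [0,1)^3 \ {0} and every A ∈ {-1,0,1}^{3×n} with pairwise distinct columns such that t+A is totally 1-submodular, one has n ≤ 12. -/

import Mathlib

open Matrix

/-- Every `k×k` minor of `A` is at most `c` in absolute value. -/
def MinorsLE {m n : ℕ} (k : ℕ) (A : Matrix (Fin m) (Fin n) ℝ) (c : ℝ) : Prop :=
  ∀ (f : Fin k ↪ Fin m) (g : Fin k ↪ Fin n), |(A.submatrix f g).det| ≤ c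

/-- `A` is totally 1-submodular: all its minors, of any size, are at most `1`
in absolute value. -/
def Totally1Submodular {m n : ℕ} (A : Matrix (Fin m) (Fin n) ℝ) : Prop :=
  ∀ k : ℕ, MinorsLE k A 1

/-- The shifted matrix `t + A`, whose columns are `t + A_j`. -/
def shiftMat {m n : ℕ} (t : Fin m → ℝ) (A : Matrix (Fin m) (Fin n) ℝ) :
    Matrix (Fin m) (Fin n) ℝ :=
  Matrix.of fun i j => t i + A i j

/-- All entries of `A` lie in `{-1, 0, 1}`. -/
def SignEntries {m n : ℕ} (A : Matrix (Fin m) (Fin n) ℝ) : Prop :=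
  ∀ i j, A i j = -1 ∨ A i j = 0 ∨ A i j = 1

/-- The data admissible for the shifted Heller constant `h_s(m)`: a translation vector
`t ∈ [0,1)^m \ {0}` and a matrix `A ∈ {-1,0,1}^{m×n}` with pairwise distinct columns
such that `t + A` is totally 1-submodular. -/
def ShiftedAdmissible (m n : ℕ) (t : Fin m → ℝ) (A : Matrix (Fin m) (Fin n) ℝ) : Prop :=
  (∀ i, 0 ≤ t i ∧ t i < 1) ∧ t ≠ 0 ∧ SignEntries A ∧
    Function.Injective A.transpose ∧ Totally1Submodular (shiftMat t A)

namespace Stmt8Aux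

/-- embedding with image a single point -/
def emb1 {m : ℕ} (a : Fin m) : Fin 1 ↪ Fin m :=
  ⟨fun _ => a, fun x y _ => Subsingleton.elim x y⟩

def emb2 {m : ℕ} (a b : Fin m) (h : a ≠ b) : Fin 2 ↪ Fin m :=
  ⟨![a, b], by
    intro x y hxy
    fin_cases x <;> fin_cases y <;> simp_all⟩

def emb3 {m : ℕ} (a b c : Fin m) (hab : a ≠ b) (hac : a ≠ c) (hbc : b ≠ c) : Fin 3 ↪ Fin m :=
  ⟨![a, b, c], by
    intro x y hxy
    fin_cases x <;> fin_cases y <;> simp_all⟩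

lemma bd1 {n : ℕ} {M : Matrix (Fin 3) (Fin n) ℝ} (hT : Totally1Submodular M)
    (i : Fin 3) (j : Fin n) : |M i j| ≤ 1 := by
  have := hT 1 (emb1 i) (emb1 j)
  rw [Matrix.det_fin_one] at this
  exact this

lemma bd2 {n : ℕ} {M : Matrix (Fin 3) (Fin n) ℝ} (hT : Totally1Submodular M)
    {i₁ i₂ : Fin 3} {j₁ j₂ : Fin n} (hi : i₁ ≠ i₂) (hj : j₁ ≠ j₂) :
    |M i₁ j₁ * M i₂ j₂ - M i₁ j₂ * M i₂ j₁| ≤ 1 := by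
  have := hT 2 (emb2 i₁ i₂ hi) (emb2 j₁ j₂ hj)
  rw [Matrix.det_fin_two] at this
  exact this

lemma bd3 {n : ℕ} {M : Matrix (Fin 3) (Fin n) ℝ} (hT : Totally1Submodular M)
    {i₁ i₂ i₃ : Fin 3} {j₁ j₂ j₃ : Fin n}
    (h12 : i₁ ≠ i₂) (h13 : i₁ ≠ i₃) (h23 : i₂ ≠ i₃)
    (g12 : j₁ ≠ j₂) (g13 : j₁ ≠ j₃) (g23 : j₂ ≠ j₃) :
    |M i₁ j₁ * (M i₂ j₂ * M i₃ j₃ - M i₂ j₃ * M i₃ j₂)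
      - M i₁ j₂ * (M i₂ j₁ * M i₃ j₃ - M i₂ j₃ * M i₃ j₁)
      + M i₁ j₃ * (M i₂ j₁ * M i₃ j₂ - M i₂ j₂ * M i₃ j₁)| ≤ 1 := by
  have := hT 3 (emb3 i₁ i₂ i₃ h12 h13 h23) (emb3 j₁ j₂ j₃ g12 g13 g23)
  rw [Matrix.det_fin_three] at this
  have e : |M i₁ j₁ * (M i₂ j₂ * M i₃ j₃ - M i₂ j₃ * M i₃ j₂)
      - M i₁ j₂ * (M i₂ j₁ * M i₃ j₃ - M i₂ j₃ * M i₃ j₁)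
      + M i₁ j₃ * (M i₂ j₁ * M i₃ j₂ - M i₂ j₂ * M i₃ j₁)|
      = |((M.submatrix (emb3 i₁ i₂ i₃ h12 h13 h23) (emb3 j₁ j₂ j₃ g12 g13 g23)).det)| := by
    rw [Matrix.det_fin_three]
    congr 1
    simp [show ⇑(emb3 i₁ i₂ i₃ h12 h13 h23) = ![i₁, i₂, i₃] from rfl,
      show ⇑(emb3 j₁ j₂ j₃ g12 g13 g23) = ![j₁, j₂, j₃] from rfl]
    ring
  rw [Matrix.det_fin_three] at e
  rw [e]
  exact this

-- mimic: transfer lemma from integer doubled matrix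
lemma tot_of_int {n : ℕ} (M : Matrix (Fin 3) (Fin n) ℝ) (C : Matrix (Fin 3) (Fin n) ℤ)
    (hMC : ∀ i j, M i j = (C i j : ℝ) / 2)
    (h1 : ∀ i j, |C i j| ≤ 2)
    (h2 : ∀ i₁ i₂ j₁ j₂, |C i₁ j₁ * C i₂ j₂ - C i₁ j₂ * C i₂ j₁| ≤ 4)
    (h3 : ∀ j₁ j₂ j₃, |C 0 j₁ * (C 1 j₂ * C 2 j₃ - C 1 j₃ * C 2 j₂)
      - C 0 j₂ * (C 1 j₁ * C 2 j₃ - C 1 j₃ * C 2 j₁)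
      + C 0 j₃ * (C 1 j₁ * C 2 j₂ - C 1 j₂ * C 2 j₁)| ≤ 8) :
    ∀ k : ℕ, ∀ (f : Fin k ↪ Fin 3) (g : Fin k ↪ Fin n), |(M.submatrix f g).det| ≤ 1 := by
  intro k
  match k with
  | 0 =>
    intro f g
    rw [Matrix.det_fin_zero]
    norm_num
  | 1 =>
    intro f g
    rw [Matrix.det_fin_one, Matrix.submatrix_apply, hMC]
    have h' : |((C (f 0) (g 0) : ℤ) : ℝ)| ≤ 2 := by exact_mod_cast h1 (f 0) (g 0)
    rw [abs_le] at h' ⊢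
    constructor <;> [linarith [h'.1]; linarith [h'.2]]
  | 2 =>
    intro f g
    have key : (4 : ℝ) * (M.submatrix f g).det
        = ((C (f 0) (g 0) * C (f 1) (g 1) - C (f 0) (g 1) * C (f 1) (g 0) : ℤ) : ℝ) := by
      rw [Matrix.det_fin_two]
      simp only [Matrix.submatrix_apply, hMC]
      push_cast
      ring
    have h' : |(4 : ℝ) * (M.submatrix f g).det| ≤ 4 := by
      rw [key]; exact_mod_cast h2 (f 0) (f 1) (g 0) (g 1)
    rw [abs_mul, abs_of_pos (by norm_num : (0:ℝ) < 4)] at h'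
    linarith
  | 3 =>
    intro f g
    have hbij : Function.Bijective f := Finite.injective_iff_bijective.mp f.injective
    set σ : Equiv.Perm (Fin 3) := Equiv.ofBijective f hbij with hσ
    have hsub : M.submatrix f g = (M.submatrix id g).submatrix σ id := by
      ext i j; simp [hσ, Equiv.ofBijective]
    rw [hsub, Matrix.det_permute]
    set N := M.submatrix id g with hN
    have key : (8 : ℝ) * N.det
        = ((C 0 (g 0) * (C 1 (g 1) * C 2 (g 2) - C 1 (g 2) * C 2 (g 1))
          - C 0 (g 1) * (C 1 (g 0) * C 2 (g 2) - C 1 (g 2) * C 2 (g 0))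
          + C 0 (g 2) * (C 1 (g 0) * C 2 (g 1) - C 1 (g 1) * C 2 (g 0)) : ℤ) : ℝ) := by
      rw [Matrix.det_fin_three]
      simp only [hN, Matrix.submatrix_apply, hMC, id]
      push_cast
      ring
    have h' : |(8 : ℝ) * N.det| ≤ 8 := by
      rw [key]; exact_mod_cast h3 (g 0) (g 1) (g 2)
    rw [abs_mul, abs_of_pos (by norm_num : (0:ℝ) < 8)] at h'
    have habs : |((Equiv.Perm.sign σ : ℤ) : ℝ) * N.det| = |N.det| := by
      rcases Int.units_eq_one_or (Equiv.Perm.sign σ) with h | h <;> rw [h] <;> simp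
    rw [habs]
    linarith
  | (k + 4) =>
    intro f g
    have := Fintype.card_le_of_embedding f
    simp [Fintype.card_fin] at this
def Az : Matrix (Fin 3) (Fin 12) ℤ :=
  Matrix.of fun i j =>
    ![![-1,-1,-1,-1,-1,-1, 0, 0, 0, 0, 0, 0],
      ![-1,-1,-1, 0, 0, 0,-1,-1,-1, 0, 0, 0],
      ![-1, 0, 1,-1, 0, 1,-1, 0, 1,-1, 0, 1]] i j

def Cz : Matrix (Fin 3) (Fin 12) ℤ :=
  Matrix.of fun i j => 2 * Az i j + ![1, 1, 0] i

noncomputable def tEx : Fin 3 → ℝ := ![1/2, 1/2, 0]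

noncomputable def AEx : Matrix (Fin 3) (Fin 12) ℝ := Matrix.of fun i j => (Az i j : ℝ)

example : ∀ i, 0 ≤ tEx i ∧ tEx i < 1 := by
  intro i; fin_cases i <;> norm_num [tEx]

example : tEx ≠ 0 := by
  intro h
  have := congrFun h 0
  norm_num [tEx] at this

example : ∀ i j, AEx i j = -1 ∨ AEx i j = 0 ∨ AEx i j = 1 := by
  have hz : ∀ i j, Az i j = -1 ∨ Az i j = 0 ∨ Az i j = 1 := by
    intro i j; fin_cases i <;> fin_cases j <;> decide
  intro i j
  rcases hz i j with h | h | h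
  · left; simp [AEx, h]
  · right; left; simp [AEx, h]
  · right; right; simp [AEx, h]

example : Function.Injective AEx.transpose := by
  have hz : Function.Injective Az.transpose := by
    intro a b; fin_cases a <;> fin_cases b <;> decide
  intro j k h
  apply hz
  funext i
  have := congrFun h i
  simp only [Matrix.transpose_apply, AEx, Matrix.of_apply] at this ⊢
  exact_mod_cast this

-- the shift relation
example : ∀ i j, (Matrix.of fun i j => tEx i + AEx i j : Matrix (Fin 3) (Fin 12) ℝ) i j = ((Cz i j : ℝ)) / 2 := by
  intro i j
  fin_cases i <;> simp [tEx, AEx, Cz, Matrix.of_apply] <;> push_cast <;> ring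

set_option maxHeartbeats 1000000 in
lemma chk : (∀ i j, |Cz i j| ≤ 2) ∧
    (∀ i₁ i₂ j₁ j₂, |Cz i₁ j₁ * Cz i₂ j₂ - Cz i₁ j₂ * Cz i₂ j₁| ≤ 4) ∧
    (∀ j₁ j₂ j₃ : Fin 12,
    |Cz 0 j₁ * (Cz 1 j₂ * Cz 2 j₃ - Cz 1 j₃ * Cz 2 j₂)
     - Cz 0 j₂ * (Cz 1 j₁ * Cz 2 j₃ - Cz 1 j₃ * Cz 2 j₁)
     + Cz 0 j₃ * (Cz 1 j₁ * Cz 2 j₂ - Cz 1 j₂ * Cz 2 j₁)| ≤ 8) := by decide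

noncomputable def cd (x : ℝ) : ℤ := if x = -1 then -1 else if x = 1 then 1 else 0

lemma cd_mem {x : ℝ} (hx : x = -1 ∨ x = 0 ∨ x = 1) : cd x = -1 ∨ cd x = 0 ∨ cd x = 1 := by
  rcases hx with h | h | h <;> subst h <;> norm_num [cd]

lemma cd_inj {x y : ℝ} (hx : x = -1 ∨ x = 0 ∨ x = 1) (hy : y = -1 ∨ y = 0 ∨ y = 1)
    (h : cd x = cd y) : x = y := by
  rcases hx with h1 | h1 | h1 <;> rcases hy with h2 | h2 | h2 <;> subst h1 <;> subst h2 <;>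
    norm_num [cd] at h <;> rfl

lemma cd_neg_one : cd (-1) = -1 := by norm_num [cd]
lemma cd_zero : cd 0 = 0 := by norm_num [cd]
lemma cd_one : cd 1 = 1 := by norm_num [cd]

lemma cd_ne_one {x : ℝ} (hx : x = -1 ∨ x = 0) : cd x ≠ 1 := by
  rcases hx with h | h <;> subst h <;> norm_num [cd]

-- component getter
def getc (i : Fin 3) (v : ℤ × ℤ × ℤ) : ℤ := ![v.1, v.2.1, v.2.2] i

-- the "at least two positive entries of t" case
lemma keyA {n : ℕ} (t : Fin 3 → ℝ) (A : Matrix (Fin 3) (Fin n) ℝ)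
    (i₁ i₂ : Fin 3) (hne : i₁ ≠ i₂)
    (hA1 : ∀ j, A i₁ j ≠ 1) (hA2 : ∀ j, A i₂ j ≠ 1)
    (hsign : SignEntries A) (hinj : Function.Injective A.transpose) : n ≤ 12 := by
  set e : Fin n → ℤ × ℤ × ℤ := fun j => (cd (A 0 j), cd (A 1 j), cd (A 2 j)) with he
  have hgete : ∀ i j, getc i (e j) = cd (A i j) := by
    intro i j; fin_cases i <;> rfl
  have einj : Function.Injective e := by
    intro j k h
    apply hinj
    funext i
    show A i j = A i k
    have : cd (A i j) = cd (A i k) := by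
      rw [← hgete i j, ← hgete i k, h]
    exact cd_inj (hsign i j) (hsign i k) this
  set T : Finset (ℤ × ℤ × ℤ) :=
    (({-1,0,1} : Finset ℤ) ×ˢ ({-1,0,1} : Finset ℤ) ×ˢ ({-1,0,1} : Finset ℤ)).filter
      (fun v => getc i₁ v ≠ 1 ∧ getc i₂ v ≠ 1) with hTdef
  have hmaps : ∀ j : Fin n, e j ∈ T := by
    intro j
    rw [hTdef, Finset.mem_filter]
    refine ⟨?_, ?_, ?_⟩
    · simp only [Finset.mem_product, Finset.mem_insert, Finset.mem_singleton]
      exact ⟨cd_mem (hsign 0 j), cd_mem (hsign 1 j), cd_mem (hsign 2 j)⟩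
    · rw [hgete]
      apply cd_ne_one
      rcases hsign i₁ j with h | h | h
      · exact Or.inl h
      · exact Or.inr h
      · exact absurd h (hA1 j)
    · rw [hgete]
      apply cd_ne_one
      rcases hsign i₂ j with h | h | h
      · exact Or.inl h
      · exact Or.inr h
      · exact absurd h (hA2 j)
  have hcard : T.card ≤ 12 := by
    rw [hTdef]
    fin_cases i₁ <;> fin_cases i₂ <;> first
      | exact absurd rfl hne
      | decide
  calc n = (Finset.univ : Finset (Fin n)).card := by simp
    _ ≤ T.card := Finset.card_le_card_of_injOn e (fun j _ => hmaps j) (einj.injOn)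
    _ ≤ 12 := hcard

lemma shiftMat_apply {m n : ℕ} (t : Fin m → ℝ) (A : Matrix (Fin m) (Fin n) ℝ)
    (i : Fin m) (j : Fin n) : shiftMat t A i j = t i + A i j := rfl

section KeyB

variable {n : ℕ} {t : Fin 3 → ℝ} {A : Matrix (Fin 3) (Fin n) ℝ} {p q r : Fin 3}

lemma window (hpq : p ≠ q) (hpr : p ≠ r) (hqr : q ≠ r)
    (hcover : ∀ i : Fin 3, i = p ∨ i = q ∨ i = r)
    (htq : t q = 0) (htr : t r = 0)
    (hsign : SignEntries A) (hinj : Function.Injective A.transpose)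
    (hT : Totally1Submodular (shiftMat t A)) (a : ℝ)
    (hbig : 1 < |2 * (t p + a)|) :
    (Finset.univ.filter (fun j => A p j = a)).card ≤ 4 := by
  classical
  set G := Finset.univ.filter (fun j : Fin n => A p j = a) with hG
  have hmemG : ∀ j ∈ G, A p j = a := by
    intro j hj; rw [hG, Finset.mem_filter] at hj; exact hj.2
  -- in rows q and r, values 1 and -1 cannot both occur within G
  have hpair : ∀ i : Fin 3, p ≠ i → t i = 0 →
      ∀ j ∈ G, ∀ k ∈ G, A i j = 1 → A i k ≠ -1 := by
    intro i hip hti j hj k hk h1 hm1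
    have hjk : j ≠ k := by
      intro h; rw [h, hm1] at h1; norm_num at h1
    have hb := bd2 hT hip hjk
    have heq : shiftMat t A p j * shiftMat t A i k - shiftMat t A p k * shiftMat t A i j
        = -(2 * (t p + a)) := by
      simp only [shiftMat_apply, hmemG j hj, hmemG k hk, hti, h1, hm1]
      ring
    rw [heq, abs_neg] at hb
    linarith
  set X : Finset ℤ := if ∃ j ∈ G, A q j = 1 then {0, 1} else {-1, 0} with hX
  set Y : Finset ℤ := if ∃ j ∈ G, A r j = 1 then {0, 1} else {-1, 0} with hY
  have hmapsX : ∀ j ∈ G, cd (A q j) ∈ X := by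
    intro j hj
    rw [hX]; split_ifs with hex
    · obtain ⟨k, hk, hk1⟩ := hex
      have hne : A q j ≠ -1 := fun hm => (hpair q hpq htq k hk j hj hk1) hm
      rcases hsign q j with h | h | h
      · exact absurd h hne
      · rw [h, cd_zero]; decide
      · rw [h, cd_one]; decide
    · push_neg at hex
      rcases hsign q j with h | h | h
      · rw [h, cd_neg_one]; decide
      · rw [h, cd_zero]; decide
      · exact absurd h (hex j hj)
  have hmapsY : ∀ j ∈ G, cd (A r j) ∈ Y := by
    intro j hj
    rw [hY]; split_ifs with hex
    · obtain ⟨k, hk, hk1⟩ := hex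
      have hne : A r j ≠ -1 := fun hm => (hpair r hpr htr k hk j hj hk1) hm
      rcases hsign r j with h | h | h
      · exact absurd h hne
      · rw [h, cd_zero]; decide
      · rw [h, cd_one]; decide
    · push_neg at hex
      rcases hsign r j with h | h | h
      · rw [h, cd_neg_one]; decide
      · rw [h, cd_zero]; decide
      · exact absurd h (hex j hj)
  have hcard : G.card ≤ (X ×ˢ Y).card :=
    Finset.card_le_card_of_injOn (fun j => (cd (A q j), cd (A r j)))
      (fun j hj => Finset.mem_product.mpr ⟨hmapsX j hj, hmapsY j hj⟩)
      (by
        intro j hj k hk h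
        simp only [Prod.mk.injEq] at h
        apply hinj
        funext i
        show A i j = A i k
        rcases hcover i with rfl | rfl | rfl
        · rw [hmemG j hj, hmemG k hk]
        · exact cd_inj (hsign i j) (hsign i k) h.1
        · exact cd_inj (hsign i j) (hsign i k) h.2)
  have hXc : X.card = 2 := by rw [hX]; split_ifs <;> decide
  have hYc : Y.card = 2 := by rw [hY]; split_ifs <;> decide
  rw [Finset.card_product, hXc, hYc] at hcard
  omega

def N5 : Finset (ℤ × ℤ) := {(0,0),(1,0),(-1,0),(0,1),(0,-1)}

lemma seven (hpq : p ≠ q) (hpr : p ≠ r) (hqr : q ≠ r)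
    (hcover : ∀ i : Fin 3, i = p ∨ i = q ∨ i = r)
    (htq : t q = 0) (htr : t r = 0)
    (hsign : SignEntries A) (hinj : Function.Injective A.transpose)
    (hT : Totally1Submodular (shiftMat t A)) (a : ℝ) :
    (Finset.univ.filter (fun j => A p j = a)).card ≤ 7 := by
  classical
  set G := Finset.univ.filter (fun j : Fin n => A p j = a) with hG
  have hmemG : ∀ j ∈ G, A p j = a := by
    intro j hj; rw [hG, Finset.mem_filter] at hj; exact hj.2
  have hτinj : Set.InjOn (fun j => (cd (A q j), cd (A r j))) G := by
    intro j hj k hk h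
    simp only [Prod.mk.injEq] at h
    apply hinj
    funext i
    show A i j = A i k
    rcases hcover i with rfl | rfl | rfl
    · rw [hmemG j hj, hmemG k hk]
    · exact cd_inj (hsign i j) (hsign i k) h.1
    · exact cd_inj (hsign i j) (hsign i k) h.2
  have hsplit := Finset.card_filter_add_card_filter_not
    (s := G) (p := fun j => A q j ≠ 0 ∧ A r j ≠ 0)
  set Gc := G.filter (fun j => A q j ≠ 0 ∧ A r j ≠ 0) with hGc
  set Gn := G.filter (fun j => ¬(A q j ≠ 0 ∧ A r j ≠ 0)) with hGn
  have hGnc : Gn.card ≤ 5 := by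
    have : ∀ j ∈ Gn, (cd (A q j), cd (A r j)) ∈ N5 := by
      intro j hj
      rw [hGn, Finset.mem_filter] at hj
      have h0 : A q j = 0 ∨ A r j = 0 := by
        rcases hj.2 with h
        by_contra hc
        push_neg at hc
        exact h ⟨hc.1, hc.2⟩
      rcases h0 with h | h
      · rw [h, cd_zero]
        rcases cd_mem (hsign r j) with h' | h' | h' <;> rw [h'] <;> decide
      · rw [h, cd_zero]
        rcases cd_mem (hsign q j) with h' | h' | h' <;> rw [h'] <;> decide
    have := Finset.card_le_card_of_injOn (fun j => (cd (A q j), cd (A r j)))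
      this (hτinj.mono (by rw [hGn]; exact fun x hx => (Finset.mem_filter.mp hx).1))
    exact this.trans (by decide)
  have hGcc : Gc.card ≤ 2 := by
    have hmemc : ∀ j ∈ Gc, j ∈ G ∧ A q j ≠ 0 ∧ A r j ≠ 0 := by
      intro j hj; rw [hGc, Finset.mem_filter] at hj; exact ⟨hj.1, hj.2⟩
    have hvq : ∀ j ∈ Gc, A q j = -1 ∨ A q j = 1 := by
      intro j hj
      rcases hsign q j with h | h | h
      · exact Or.inl h
      · exact absurd h (hmemc j hj).2.1
      · exact Or.inr h
    have hvr : ∀ j ∈ Gc, A r j = -1 ∨ A r j = 1 := by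
      intro j hj
      rcases hsign r j with h | h | h
      · exact Or.inl h
      · exact absurd h (hmemc j hj).2.2
      · exact Or.inr h
    have prodrule : ∀ j ∈ Gc, ∀ k ∈ Gc, A q j * A r j = A q k * A r k := by
      intro j hj k hk
      by_cases hjk : j = k
      · rw [hjk]
      · have hb := bd2 hT hqr hjk
        have hb' : |A q j * A r k - A q k * A r j| ≤ 1 := by
          simpa [shiftMat_apply, htq, htr] using hb
        rcases hvq j hj with h1 | h1 <;> rcases hvr j hj with h2 | h2 <;>
          rcases hvq k hk with h3 | h3 <;> rcases hvr k hk with h4 | h4 <;>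
          rw [h1, h2, h3, h4] <;> rw [h1, h2, h3, h4] at hb' <;> norm_num at hb' <;> norm_num
    rcases Finset.eq_empty_or_nonempty Gc with he | ⟨j₀, hj₀⟩
    · rw [he]; simp
    · set Tc : Finset (ℤ × ℤ) :=
        if A q j₀ * A r j₀ = 1 then {(1,1),(-1,-1)} else {(1,-1),(-1,1)} with hTc
    
      have hmapsc : ∀ j ∈ Gc, (cd (A q j), cd (A r j)) ∈ Tc := by
        intro j hj
        have hpr := prodrule j hj j₀ hj₀
        rw [hTc]
        rcases hvq j hj with h1 | h1 <;> rcases hvr j hj with h2 | h2 <;>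
          rw [h1, h2] at hpr <;> rw [h1, h2] <;> simp only [cd_neg_one, cd_one]
        all_goals split_ifs with hc
        all_goals first
          | decide
          | (exfalso; rw [← hpr] at hc; norm_num at hc)
          | (exfalso; apply hc; rw [← hpr]; norm_num)
      have := Finset.card_le_card_of_injOn (fun j => (cd (A q j), cd (A r j)))
        hmapsc (hτinj.mono (by rw [hGc]; exact fun x hx => (Finset.mem_filter.mp hx).1))
      have hTcc : Tc.card = 2 := by rw [hTc]; split_ifs <;> decide
      omega
  omega

lemma cd_eq_neg_one {x : ℝ} (hx : x = -1 ∨ x = 0 ∨ x = 1) (h : cd x = -1) : x = -1 :=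
  cd_inj hx (Or.inl rfl) (by rw [h, cd_neg_one])

lemma cd_eq_zero' {x : ℝ} (hx : x = -1 ∨ x = 0 ∨ x = 1) (h : cd x = 0) : x = 0 :=
  cd_inj hx (Or.inr (Or.inl rfl)) (by rw [h, cd_zero])

lemma cd_eq_one {x : ℝ} (hx : x = -1 ∨ x = 0 ∨ x = 1) (h : cd x = 1) : x = 1 :=
  cd_inj hx (Or.inr (Or.inr rfl)) (by rw [h, cd_one])

lemma cornerTails (hqr : q ≠ r) (htq : t q = 0) (htr : t r = 0)
    (hsign : SignEntries A) (hT : Totally1Submodular (shiftMat t A))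
    (j₀ : Fin n) (hq₀ : A q j₀ ≠ 0) (hr₀ : A r j₀ ≠ 0) :
    ∃ Tc : Finset (ℤ × ℤ), Tc.card = 2 ∧
      ∀ j, A q j ≠ 0 → A r j ≠ 0 → (cd (A q j), cd (A r j)) ∈ Tc := by
  classical
  have hvq : ∀ j : Fin n, A q j ≠ 0 → A q j = -1 ∨ A q j = 1 := by
    intro j hj
    rcases hsign q j with h | h | h
    · exact Or.inl h
    · exact absurd h hj
    · exact Or.inr h
  have hvr : ∀ j : Fin n, A r j ≠ 0 → A r j = -1 ∨ A r j = 1 := by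
    intro j hj
    rcases hsign r j with h | h | h
    · exact Or.inl h
    · exact absurd h hj
    · exact Or.inr h
  have prodrule : ∀ j k : Fin n, A q j ≠ 0 → A r j ≠ 0 → A q k ≠ 0 → A r k ≠ 0 →
      A q j * A r j = A q k * A r k := by
    intro j k hqj hrj hqk hrk
    by_cases hjk : j = k
    · rw [hjk]
    · have hb := bd2 hT hqr hjk
      have hb' : |A q j * A r k - A q k * A r j| ≤ 1 := by
        simpa [shiftMat_apply, htq, htr] using hb
      rcases hvq j hqj with h1 | h1 <;> rcases hvr j hrj with h2 | h2 <;>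
        rcases hvq k hqk with h3 | h3 <;> rcases hvr k hrk with h4 | h4 <;>
        rw [h1, h2, h3, h4] <;> rw [h1, h2, h3, h4] at hb' <;> norm_num at hb' <;> norm_num
  refine ⟨if A q j₀ * A r j₀ = 1 then {(1,1),(-1,-1)} else {(1,-1),(-1,1)}, ?_, ?_⟩
  · split_ifs <;> decide
  · intro j hqj hrj
    have hpr := prodrule j j₀ hqj hrj hq₀ hr₀
    rcases hvq j hqj with h1 | h1 <;> rcases hvr j hrj with h2 | h2 <;>
      rw [h1, h2] at hpr <;> rw [h1, h2] <;> simp only [cd_neg_one, cd_one]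
    all_goals split_ifs with hc
    all_goals first
      | decide
      | (exfalso; rw [← hpr] at hc; norm_num at hc)
      | (exfalso; apply hc; rw [← hpr]; norm_num)

def T10 : Finset (ℤ × ℤ × ℤ) := ({-1, 0} : Finset ℤ) ×ˢ N5

lemma keyB (hpq : p ≠ q) (hpr : p ≠ r) (hqr : q ≠ r)
    (hcover : ∀ i : Fin 3, i = p ∨ i = q ∨ i = r)
    (hs0 : 0 < t p) (hs1 : t p < 1) (htq : t q = 0) (htr : t r = 0)
    (hsign : SignEntries A) (hinj : Function.Injective A.transpose)
    (hT : Totally1Submodular (shiftMat t A)) : n ≤ 12 := by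
  classical
  have hApj : ∀ j, A p j = -1 ∨ A p j = 0 := by
    intro j
    rcases hsign p j with h | h | h
    · exact Or.inl h
    · exact Or.inr h
    · exfalso
      have hb := bd1 hT p j
      rw [shiftMat_apply, h, abs_le] at hb
      linarith [hb.2]
  have hcdp : ∀ j, cd (A p j) = -1 ∨ cd (A p j) = 0 := by
    intro j
    rcases hApj j with h | h <;> rw [h] <;> simp [cd_neg_one, cd_zero]
  rcases lt_trichotomy (t p) (1/2) with hlt | hhalf | hgt
  · -- s < 1/2
    have h4 : (Finset.univ.filter (fun j : Fin n => A p j = -1)).card ≤ 4 := by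
      apply window hpq hpr hqr hcover htq htr hsign hinj hT (-1)
      have hneg : 2 * (t p + -1) < 0 := by linarith
      rw [abs_of_neg hneg]; linarith
    have h7 : (Finset.univ.filter (fun j : Fin n => A p j = 0)).card ≤ 7 :=
      seven hpq hpr hqr hcover htq htr hsign hinj hT 0
    have hsum := Finset.card_filter_add_card_filter_not
      (s := (Finset.univ : Finset (Fin n))) (p := fun j => A p j = -1)
    have hfe : Finset.univ.filter (fun j : Fin n => ¬(A p j = -1))
        = Finset.univ.filter (fun j : Fin n => A p j = 0) := by
      apply Finset.filter_congr
      intro j _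
      rcases hApj j with h | h <;> simp [h]
    rw [hfe] at hsum
    have : (Finset.univ : Finset (Fin n)).card = n := Finset.card_fin n
    omega
  · -- s = 1/2 : the hard case
    set e : Fin n → ℤ × ℤ × ℤ := fun j => (cd (A p j), cd (A q j), cd (A r j)) with he
    have einj : Function.Injective e := by
      intro j k h
      simp only [he, Prod.mk.injEq] at h
      apply hinj
      funext i
      show A i j = A i k
      rcases hcover i with rfl | rfl | rfl
      · exact cd_inj (hsign i j) (hsign i k) h.1
      · exact cd_inj (hsign i j) (hsign i k) h.2.1
      · exact cd_inj (hsign i j) (hsign i k) h.2.2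
    set C := Finset.univ.filter (fun j : Fin n => A q j ≠ 0 ∧ A r j ≠ 0) with hC
    set N := Finset.univ.filter (fun j : Fin n => ¬(A q j ≠ 0 ∧ A r j ≠ 0)) with hN
    have hsplit := Finset.card_filter_add_card_filter_not
      (s := (Finset.univ : Finset (Fin n))) (p := fun j => A q j ≠ 0 ∧ A r j ≠ 0)
    rw [← hC, ← hN] at hsplit
    have hcardu : (Finset.univ : Finset (Fin n)).card = n := Finset.card_fin n
    have hmemN : ∀ j ∈ N, A q j = 0 ∨ A r j = 0 := by
      intro j hj
      rw [hN, Finset.mem_filter] at hj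
      by_contra hcon
      push_neg at hcon
      exact hj.2 ⟨hcon.1, hcon.2⟩
    have hmemC : ∀ j ∈ C, A q j ≠ 0 ∧ A r j ≠ 0 := by
      intro j hj
      rw [hC, Finset.mem_filter] at hj
      exact hj.2
    have heT10 : ∀ j ∈ N, e j ∈ T10 := by
      intro j hj
      rw [T10, Finset.mem_product]
      constructor
      · rcases hcdp j with h | h <;> rw [he] <;> simp only [h] <;> decide
      · show ((cd (A q j), cd (A r j)) : ℤ × ℤ) ∈ N5
        rcases hmemN j hj with h | h
        · rw [h, cd_zero]
          rcases cd_mem (hsign r j) with h' | h' | h' <;> rw [h'] <;> decide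
        · rw [h, cd_zero]
          rcases cd_mem (hsign q j) with h' | h' | h' <;> rw [h'] <;> decide
    -- triple exclusion
    have excl : ∀ j₀ ∈ C, ∀ j₁ ∈ N, ∀ j₂ ∈ N,
        A p j₁ = A p j₀ → A q j₁ = -(A q j₀) → A r j₁ = 0 →
        A p j₂ = A p j₀ → A q j₂ = 0 → A r j₂ = -(A r j₀) → False := by
      intro j₀ hj₀ j₁ hj₁ j₂ hj₂ hp1 hq1 hr1 hp2 hq2 hr2
      obtain ⟨hq₀, hr₀⟩ := hmemC j₀ hj₀
      have hvq : A q j₀ = -1 ∨ A q j₀ = 1 := by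
        rcases hsign q j₀ with h | h | h
        · exact Or.inl h
        · exact absurd h hq₀
        · exact Or.inr h
      have hvr : A r j₀ = -1 ∨ A r j₀ = 1 := by
        rcases hsign r j₀ with h | h | h
        · exact Or.inl h
        · exact absurd h hr₀
        · exact Or.inr h
      have h01 : j₀ ≠ j₁ := by
        intro h; rw [← h] at hr1; exact hr₀ hr1
      have h02 : j₀ ≠ j₂ := by
        intro h; rw [← h] at hq2; exact hq₀ hq2
      have h12 : j₁ ≠ j₂ := by
        intro h
        rw [h, hq2] at hq1
        rcases hvq with hv | hv <;> rw [hv] at hq1 <;> norm_num at hq1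
      have hb := bd3 hT hpq hpr hqr h01 h02 h12
      simp only [shiftMat_apply, htq, htr, hp1, hq1, hr1, hp2, hq2, hr2, zero_add] at hb
      rcases hApj j₀ with ha | ha <;> rcases hvq with hX | hX <;> rcases hvr with hY | hY <;>
        rw [ha, hX, hY, hhalf] at hb <;> rw [abs_le] at hb <;> norm_num at hb
    have missN : ∀ j₀ ∈ C, ∃ w ∈ T10, w.1 = cd (A p j₀) ∧ ∀ j ∈ N, e j ≠ w := by
      intro j₀ hj₀
      obtain ⟨hq₀, hr₀⟩ := hmemC j₀ hj₀
      have hvq : A q j₀ = -1 ∨ A q j₀ = 1 := by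
        rcases hsign q j₀ with h | h | h
        · exact Or.inl h
        · exact absurd h hq₀
        · exact Or.inr h
      have hvr : A r j₀ = -1 ∨ A r j₀ = 1 := by
        rcases hsign r j₀ with h | h | h
        · exact Or.inl h
        · exact absurd h hr₀
        · exact Or.inr h
      set v₁ : ℤ × ℤ × ℤ := (cd (A p j₀), -(cd (A q j₀)), 0) with hv₁
      set v₂ : ℤ × ℤ × ℤ := (cd (A p j₀), 0, -(cd (A r j₀))) with hv₂
      have hv₁T : v₁ ∈ T10 := by
        rw [hv₁]
        rcases hcdp j₀ with h | h <;> rcases hvq with h' | h' <;>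
          rw [h, h'] <;> simp only [cd_neg_one, cd_one] <;> decide
      have hv₂T : v₂ ∈ T10 := by
        rw [hv₂]
        rcases hcdp j₀ with h | h <;> rcases hvr with h' | h' <;>
          rw [h, h'] <;> simp only [cd_neg_one, cd_one] <;> decide
      by_cases h1 : ∃ j ∈ N, e j = v₁
      · refine ⟨v₂, hv₂T, rfl, ?_⟩
        intro j₂ hj₂ hej₂
        obtain ⟨j₁, hj₁, hej₁⟩ := h1
        rw [he, hv₁, Prod.mk.injEq, Prod.mk.injEq] at hej₁
        rw [he, hv₂, Prod.mk.injEq, Prod.mk.injEq] at hej₂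
        have hp1 : A p j₁ = A p j₀ := cd_inj (hsign p j₁) (hsign p j₀) hej₁.1
        have hp2 : A p j₂ = A p j₀ := cd_inj (hsign p j₂) (hsign p j₀) hej₂.1
        have hr1 : A r j₁ = 0 := cd_eq_zero' (hsign r j₁) hej₁.2.2
        have hq2 : A q j₂ = 0 := cd_eq_zero' (hsign q j₂) hej₂.2.1
        have hq1 : A q j₁ = -(A q j₀) := by
          rcases hvq with h' | h'
          · rw [h']
            have : cd (A q j₁) = 1 := by rw [hej₁.2.1, h', cd_neg_one]; norm_num
            rw [cd_eq_one (hsign q j₁) this]; norm_num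
          · rw [h']
            have : cd (A q j₁) = -1 := by rw [hej₁.2.1, h', cd_one]
            rw [cd_eq_neg_one (hsign q j₁) this]
        have hr2 : A r j₂ = -(A r j₀) := by
          rcases hvr with h' | h'
          · rw [h']
            have : cd (A r j₂) = 1 := by rw [hej₂.2.2, h', cd_neg_one]; norm_num
            rw [cd_eq_one (hsign r j₂) this]; norm_num
          · rw [h']
            have : cd (A r j₂) = -1 := by rw [hej₂.2.2, h', cd_one]
            rw [cd_eq_neg_one (hsign r j₂) this]
        exact excl j₀ hj₀ j₁ hj₁ j₂ hj₂ hp1 hq1 hr1 hp2 hq2 hr2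
      · exact ⟨v₁, hv₁T, rfl, fun j hj hej => h1 ⟨j, hj, hej⟩⟩
    have hN10 : N.card ≤ 10 := by
      have := Finset.card_le_card_of_injOn e (fun j hj => heT10 j hj) (einj.injOn)
      have hT10c : T10.card = 10 := by decide
      omega
    -- C bound
    rcases Nat.lt_or_ge C.card 3 with hc3 | hc3
    · omega
    · have hCne : ∃ j₀, j₀ ∈ C := by
        have : 0 < C.card := by omega
        obtain ⟨j₀, hj₀⟩ := Finset.card_pos.mp this
        exact ⟨j₀, hj₀⟩
      obtain ⟨j₀, hj₀⟩ := hCne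
      obtain ⟨Tc, hTcc, hTcmem⟩ := cornerTails hqr htq htr hsign hT j₀
        (hmemC j₀ hj₀).1 (hmemC j₀ hj₀).2
      have hC4 : C.card ≤ 4 := by
        have hmaps : ∀ j ∈ C, e j ∈ ({-1, 0} : Finset ℤ) ×ˢ Tc := by
          intro j hj
          rw [Finset.mem_product]
          constructor
          · rcases hcdp j with h | h <;> rw [he] <;> simp only [h] <;> decide
          · exact hTcmem j (hmemC j hj).1 (hmemC j hj).2
        have := Finset.card_le_card_of_injOn e hmaps (einj.injOn)
        rw [Finset.card_product, hTcc] at this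
        simpa using this
      obtain ⟨w, hwT, hw1, hwmiss⟩ := missN j₀ hj₀
      have hN9 : N.card ≤ 9 := by
        have hmaps : ∀ j ∈ N, e j ∈ T10.erase w := by
          intro j hj
          exact Finset.mem_erase.mpr ⟨hwmiss j hj, heT10 j hj⟩
        have := Finset.card_le_card_of_injOn e hmaps (einj.injOn)
        rw [Finset.card_erase_of_mem hwT] at this
        have hT10c : T10.card = 10 := by decide
        omega
      rcases Nat.lt_or_ge C.card 4 with hc4 | hc4
      · omega
      · -- C.card = 4 : pigeonhole, two corner columns with the same tail
        have hpig : ∃ j₁ ∈ C, ∃ j₂ ∈ C, j₁ ≠ j₂ ∧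
            (cd (A q j₁), cd (A r j₁)) = (cd (A q j₂), cd (A r j₂)) := by
          have hmaps : ∀ j ∈ C, (cd (A q j), cd (A r j)) ∈ Tc :=
            fun j hj => hTcmem j (hmemC j hj).1 (hmemC j hj).2
          have hlt : Tc.card < C.card := by omega
          obtain ⟨j₁, hj₁, j₂, hj₂, hne, heq⟩ :=
            Finset.exists_ne_map_eq_of_card_lt_of_maps_to hlt hmaps
          exact ⟨j₁, hj₁, j₂, hj₂, hne, heq⟩
        obtain ⟨j₁, hj₁, j₂, hj₂, hne12, htl⟩ := hpig
        rw [Prod.mk.injEq] at htl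
        have hpne : cd (A p j₁) ≠ cd (A p j₂) := by
          intro hcon
          apply hne12
          apply einj
          rw [he]
          simp only [Prod.mk.injEq]
          exact ⟨hcon, htl.1, htl.2⟩
        obtain ⟨w1, hw1T, hw11, hw1miss⟩ := missN j₁ hj₁
        obtain ⟨w2, hw2T, hw21, hw2miss⟩ := missN j₂ hj₂
        have hwne : w1 ≠ w2 := by
          intro hcon
          apply hpne
          rw [← hw11, ← hw21, hcon]
        have hN8 : N.card ≤ 8 := by
          have hmaps : ∀ j ∈ N, e j ∈ (T10.erase w1).erase w2 := by
            intro j hj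
            exact Finset.mem_erase.mpr ⟨hw2miss j hj,
              Finset.mem_erase.mpr ⟨hw1miss j hj, heT10 j hj⟩⟩
          have := Finset.card_le_card_of_injOn e hmaps (einj.injOn)
          have h2 : ((T10.erase w1).erase w2).card = T10.card - 2 := by
            rw [Finset.card_erase_of_mem (Finset.mem_erase.mpr ⟨hwne.symm, hw2T⟩),
              Finset.card_erase_of_mem hw1T]
            omega
          have hT10c : T10.card = 10 := by decide
          omega
        omega
  · -- s > 1/2
    have h4 : (Finset.univ.filter (fun j : Fin n => A p j = 0)).card ≤ 4 := by
      apply window hpq hpr hqr hcover htq htr hsign hinj hT 0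
      have hpos : 0 < 2 * (t p + 0) := by linarith
      rw [abs_of_pos hpos]; linarith
    have h7 : (Finset.univ.filter (fun j : Fin n => A p j = -1)).card ≤ 7 :=
      seven hpq hpr hqr hcover htq htr hsign hinj hT (-1)
    have hsum := Finset.card_filter_add_card_filter_not
      (s := (Finset.univ : Finset (Fin n))) (p := fun j => A p j = -1)
    have hfe : Finset.univ.filter (fun j : Fin n => ¬(A p j = -1))
        = Finset.univ.filter (fun j : Fin n => A p j = 0) := by
      apply Finset.filter_congr
      intro j _
      rcases hApj j with h | h <;> simp [h]
    rw [hfe] at hsum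
    have : (Finset.univ : Finset (Fin n)).card = n := Finset.card_fin n
    omega

end KeyB

lemma exist : ShiftedAdmissible 3 12 tEx AEx := by
  refine ⟨?_, ?_, ?_, ?_, ?_⟩
  · intro i; fin_cases i <;> norm_num [tEx]
  · intro h; have := congrFun h 0; norm_num [tEx] at this
  · have hz : ∀ i j, Az i j = -1 ∨ Az i j = 0 ∨ Az i j = 1 := by
      intro i j; fin_cases i <;> fin_cases j <;> decide
    intro i j
    rcases hz i j with h | h | h
    · left; simp [AEx, h]
    · right; left; simp [AEx, h]
    · right; right; simp [AEx, h]
  · have hz : Function.Injective Az.transpose := by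
      intro a b; fin_cases a <;> fin_cases b <;> decide
    intro j k h
    apply hz
    funext i
    have := congrFun h i
    simp only [Matrix.transpose_apply, AEx, Matrix.of_apply] at this ⊢
    exact_mod_cast this
  · have hMC : ∀ i j, shiftMat tEx AEx i j = ((Cz i j : ℝ)) / 2 := by
      intro i j
      fin_cases i <;> simp [shiftMat, tEx, AEx, Cz, Matrix.of_apply] <;> push_cast <;> ring
    intro k
    exact tot_of_int (shiftMat tEx AEx) Cz hMC chk.1 chk.2.1 chk.2.2 k

end Stmt8Aux
theorem stmt8 :
    (∃ (t : Fin 3 → ℝ) (A : Matrix (Fin 3) (Fin 12) ℝ), ShiftedAdmissible 3 12 t A) ∧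
    (∀ (n : ℕ) (t : Fin 3 → ℝ) (A : Matrix (Fin 3) (Fin n) ℝ),
      ShiftedAdmissible 3 n t A → n ≤ 12) := by
  constructor
  · exact ⟨Stmt8Aux.tEx, Stmt8Aux.AEx, Stmt8Aux.exist⟩
  · intro n t A hadm
    obtain ⟨hrange, hne, hsign, hinj, hT⟩ := hadm
    have hA1 : ∀ i : Fin 3, 0 < t i → ∀ j, A i j ≠ 1 := by
      intro i hi j hij
      have hb := Stmt8Aux.bd1 hT i j
      rw [Stmt8Aux.shiftMat_apply, hij, abs_le] at hb
      linarith [hb.2]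
    have ht0 : ∀ i : Fin 3, ¬ 0 < t i → t i = 0 := fun i h =>
      le_antisymm (not_lt.mp h) (hrange i).1
    by_cases h0 : 0 < t 0 <;> by_cases h1 : 0 < t 1 <;> by_cases h2 : 0 < t 2
    · exact Stmt8Aux.keyA t A 0 1 (by decide) (hA1 0 h0) (hA1 1 h1) hsign hinj
    · exact Stmt8Aux.keyA t A 0 1 (by decide) (hA1 0 h0) (hA1 1 h1) hsign hinj
    · exact Stmt8Aux.keyA t A 0 2 (by decide) (hA1 0 h0) (hA1 2 h2) hsign hinj
    · exact Stmt8Aux.keyB (p := 0) (q := 1) (r := 2) (by decide) (by decide) (by decide)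
        (by decide) h0 (hrange 0).2 (ht0 1 h1) (ht0 2 h2) hsign hinj hT
    · exact Stmt8Aux.keyA t A 1 2 (by decide) (hA1 1 h1) (hA1 2 h2) hsign hinj
    · exact Stmt8Aux.keyB (p := 1) (q := 0) (r := 2) (by decide) (by decide) (by decide)
        (by decide) h1 (hrange 1).2 (ht0 0 h0) (ht0 2 h2) hsign hinj hT
    · exact Stmt8Aux.keyB (p := 2) (q := 0) (r := 1) (by decide) (by decide) (by decide)
        (by decide) h2 (hrange 2).2 (ht0 0 h0) (ht0 1 h1) hsign hinj hT
    · exfalso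
      apply hne
      funext i
      show t i = 0
      fin_cases i
      · exact ht0 0 h0
      · exact ht0 1 h1
      · exact ht0 2 h2
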